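/- Let j₀ be a compatible positive complex structure on (E, ω) and let j be a complex structure on E compatible with ω such that Λ^{1,0}_j E*, viewed inside E* ⊗ ℂ = Λ^{1,0}_{j₀}E* ⊕ Λ^{0,1}_{j₀}E*, is the graph of a ℂ-linear map μ : Λ^{1,0}_{j₀}E* → Λ^{0,1}_{j₀}E*. Then j is positive if and only if the endomorphism Id − μᵗ ∘ μ̄ᵗ of E^{1,0}_{j₀} is positive definite for the Hermitian inner product h(X, Y) := −i·ω(X, Ȳ) on E^{1,0}_{j₀} (which is positive definite since j₀ is compatible and positive); that is, h((Id − μᵗ∘μ̄ᵗ)X, X) > 0 for all X ∈ E^{1,0}_{j₀} with X ≠ 0. Here μ̄ : Λ^{0,1}_{j₀}E* → Λ^{1,0}_{j₀}E* is the conjugate map μ̄(α) := conj(μ(conj α)), μᵗ : E^{0,1}_{j₀} → E^{1,0}_{j₀} and μ̄ᵗ : E^{1,0}_{j₀} → E^{0,1}_{j₀} are the transposes (characterized by α(μᵗX) = (μα)(X) and β(μ̄ᵗX) = (μ̄β)(X)), ω is extended ℂ-bilinearly to E ⊗ ℂ, and Ȳ denotes the conjugate of Y in E ⊗ ℂ.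 -/

import Mathlib

open Complex TensorProduct

noncomputable section

variable {E : Type*} [AddCommGroup E] [Module ℝ E]

/-- `j` is a complex structure on `E`: `j ∘ j = -id`. -/
def IsCplxStruct (j : E →ₗ[ℝ] E) : Prop := ∀ x : E, j (j x) = -x

/-- `j` is compatible with the symplectic form `ω`. -/
def OmCompat (ω : LinearMap.BilinForm ℝ E) (j : E →ₗ[ℝ] E) : Prop :=
  ∀ x y : E, ω (j x) (j y) = ω x y

/-- `j` is positive with respect to `ω`. -/
def OmPos (ω : LinearMap.BilinForm ℝ E) (j : E →ₗ[ℝ] E) : Prop :=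
  ∀ x : E, x ≠ 0 → 0 < ω x (j x)

/-- `ω` is alternating. -/
def OmAlt (ω : LinearMap.BilinForm ℝ E) : Prop := ∀ x : E, ω x x = 0

/-- `ω` is nondegenerate. -/
def OmNondeg (ω : LinearMap.BilinForm ℝ E) : Prop :=
  ∀ x : E, (∀ y : E, ω x y = 0) → x = 0

/-- The `ℂ`-linear extension of `j` to the complexification `ℂ ⊗[ℝ] E`. -/
def cplxExt (j : E →ₗ[ℝ] E) : Module.End ℂ (ℂ ⊗[ℝ] E) := j.baseChange ℂ

/-- `E^{1,0}_j`: the `i`-eigenspace of the `ℂ`-linear extension of `j`. -/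
def E10 (j : E →ₗ[ℝ] E) : Submodule ℂ (ℂ ⊗[ℝ] E) :=
  Module.End.eigenspace (cplxExt j) Complex.I

/-- `E^{0,1}_j`: the `(-i)`-eigenspace of the `ℂ`-linear extension of `j`. -/
def E01 (j : E →ₗ[ℝ] E) : Submodule ℂ (ℂ ⊗[ℝ] E) :=
  Module.End.eigenspace (cplxExt j) (-Complex.I)

/-- `Λ^{1,0}_j E*`: `ℂ`-valued `ℝ`-linear forms with `α (j v) = i · α v`. -/
def Lam10 (j : E →ₗ[ℝ] E) : Submodule ℂ (E →ₗ[ℝ] ℂ) where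
  carrier := {α | ∀ x : E, α (j x) = Complex.I * α x}
  add_mem' := by
    intro a b ha hb x
    simp only [LinearMap.add_apply, ha x, hb x]; ring
  zero_mem' := by intro x; simp
  smul_mem' := by
    intro c a ha x
    simp only [LinearMap.smul_apply, ha x, smul_eq_mul]; ring

/-- `Λ^{0,1}_j E*`: `ℂ`-valued `ℝ`-linear forms with `α (j v) = -i · α v`. -/
def Lam01 (j : E →ₗ[ℝ] E) : Submodule ℂ (E →ₗ[ℝ] ℂ) where
  carrier := {α | ∀ x : E, α (j x) = -(Complex.I * α x)}
  add_mem' := by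
    intro a b ha hb x
    simp only [LinearMap.add_apply, ha x, hb x]; ring
  zero_mem' := by intro x; simp
  smul_mem' := by
    intro c a ha x
    simp only [LinearMap.smul_apply, ha x, smul_eq_mul]; ring

/-- The `ℂ`-linear extension of a `ℂ`-valued `ℝ`-linear form to `ℂ ⊗[ℝ] E`. -/
def extendC (α : E →ₗ[ℝ] ℂ) : (ℂ ⊗[ℝ] E) →ₗ[ℂ] ℂ :=
  TensorProduct.AlgebraTensorModule.lift (LinearMap.toSpanSingleton ℂ (E →ₗ[ℝ] ℂ) α)

/-- The `ℂ`-bilinear extension of `ω` to `ℂ ⊗[ℝ] E`. -/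
def omC (ω : LinearMap.BilinForm ℝ E) : LinearMap.BilinForm ℂ (ℂ ⊗[ℝ] E) :=
  ω.baseChange ℂ

/-- Complex conjugation on `ℂ ⊗[ℝ] E`. -/
def conjTensor : (ℂ ⊗[ℝ] E) →ₗ[ℝ] (ℂ ⊗[ℝ] E) :=
  TensorProduct.map Complex.conjAe.toLinearMap LinearMap.id

/-- The conjugate of a `ℂ`-valued `ℝ`-linear form. -/
def conjForm (α : E →ₗ[ℝ] ℂ) : E →ₗ[ℝ] ℂ :=
  Complex.conjAe.toLinearMap ∘ₗ α

section Helpers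

variable {E : Type*} [AddCommGroup E] [Module ℝ E]

@[simp] lemma extendC_tmul (α : E →ₗ[ℝ] ℂ) (c : ℂ) (x : E) :
    extendC α (c ⊗ₜ[ℝ] x) = c * α x := by
  simp [extendC, LinearMap.toSpanSingleton_apply]

lemma extendC_add (α β : E →ₗ[ℝ] ℂ) (v : ℂ ⊗[ℝ] E) :
    extendC (α + β) v = extendC α v + extendC β v := by
  induction v using TensorProduct.induction_on with
  | zero => simp
  | tmul c x => simp; ring
  | add u w hu hw => simp only [map_add, hu, hw]; ring

@[simp] lemma conjTensor_tmul (c : ℂ) (x : E) :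
    conjTensor (c ⊗ₜ[ℝ] x) = (starRingEnd ℂ) c ⊗ₜ[ℝ] x := rfl

@[simp] lemma cplxExt_tmul (j : E →ₗ[ℝ] E) (c : ℂ) (x : E) :
    cplxExt j (c ⊗ₜ[ℝ] x) = c ⊗ₜ[ℝ] j x := rfl

@[simp] lemma conjTensor_conjTensor (v : ℂ ⊗[ℝ] E) : conjTensor (conjTensor v) = v := by
  induction v using TensorProduct.induction_on with
  | zero => simp
  | tmul c x => simp
  | add u w hu hw => simp [map_add, hu, hw]

lemma conjTensor_smul (c : ℂ) (v : ℂ ⊗[ℝ] E) :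
    conjTensor (c • v) = (starRingEnd ℂ) c • conjTensor v := by
  induction v using TensorProduct.induction_on with
  | zero => simp
  | tmul a x => simp [TensorProduct.smul_tmul', smul_eq_mul]
  | add u w hu hw => simp [smul_add, map_add, hu, hw]

lemma conjTensor_cplxExt (j : E →ₗ[ℝ] E) (v : ℂ ⊗[ℝ] E) :
    conjTensor (cplxExt j v) = cplxExt j (conjTensor v) := by
  induction v using TensorProduct.induction_on with
  | zero => simp
  | tmul a x => simp
  | add u w hu hw => simp [map_add, hu, hw]

lemma cplxExt_sq {j : E →ₗ[ℝ] E} (hj : IsCplxStruct j) (v : ℂ ⊗[ℝ] E) :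
    cplxExt j (cplxExt j v) = -v := by
  induction v using TensorProduct.induction_on with
  | zero => simp
  | tmul a x => simp [hj x, TensorProduct.tmul_neg]
  | add u w hu hw => simp [map_add, hu, hw]; abel

lemma mem_E10 {j : E →ₗ[ℝ] E} {v : ℂ ⊗[ℝ] E} :
    v ∈ E10 j ↔ cplxExt j v = Complex.I • v := Module.End.mem_eigenspace_iff

lemma mem_E01 {j : E →ₗ[ℝ] E} {v : ℂ ⊗[ℝ] E} :
    v ∈ E01 j ↔ cplxExt j v = (-Complex.I) • v := Module.End.mem_eigenspace_iff

lemma conjTensor_mem_E01 {j : E →ₗ[ℝ] E} {v : ℂ ⊗[ℝ] E} (hv : v ∈ E10 j) :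
    conjTensor v ∈ E01 j := by
  rw [mem_E10] at hv
  rw [mem_E01, ← conjTensor_cplxExt, hv, conjTensor_smul]
  simp

lemma conjTensor_mem_E10 {j : E →ₗ[ℝ] E} {v : ℂ ⊗[ℝ] E} (hv : v ∈ E01 j) :
    conjTensor v ∈ E10 j := by
  rw [mem_E01] at hv
  rw [mem_E10, ← conjTensor_cplxExt, hv, conjTensor_smul]
  simp

/-- `(1,0)` projection. -/
def p10 (j : E →ₗ[ℝ] E) (v : ℂ ⊗[ℝ] E) : ℂ ⊗[ℝ] E :=
  (2⁻¹ : ℂ) • (v - Complex.I • cplxExt j v)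

/-- `(0,1)` projection. -/
def p01 (j : E →ₗ[ℝ] E) (v : ℂ ⊗[ℝ] E) : ℂ ⊗[ℝ] E :=
  (2⁻¹ : ℂ) • (v + Complex.I • cplxExt j v)

lemma p_decomp (j : E →ₗ[ℝ] E) (v : ℂ ⊗[ℝ] E) : p10 j v + p01 j v = v := by
  unfold p10 p01; module

lemma p10_mem {j : E →ₗ[ℝ] E} (hj : IsCplxStruct j) (v : ℂ ⊗[ℝ] E) :
    p10 j v ∈ E10 j := by
  rw [mem_E10]
  unfold p10
  rw [map_smul, map_sub, map_smul, cplxExt_sq hj]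
  match_scalars <;> (ring_nf; try simp [Complex.I_sq]; try norm_num)

lemma p01_mem {j : E →ₗ[ℝ] E} (hj : IsCplxStruct j) (v : ℂ ⊗[ℝ] E) :
    p01 j v ∈ E01 j := by
  rw [mem_E01]
  unfold p01
  rw [map_smul, map_add, map_smul, cplxExt_sq hj]
  match_scalars <;> (ring_nf; try simp [Complex.I_sq]; try norm_num)

lemma conjTensor_p10 (j : E →ₗ[ℝ] E) (v : ℂ ⊗[ℝ] E) :
    conjTensor (p10 j v) = p01 j (conjTensor v) := by
  unfold p10 p01
  have h2 : (starRingEnd ℂ) (2⁻¹ : ℂ) = 2⁻¹ := by simp; norm_num [Complex.ext_iff]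
  rw [conjTensor_smul, map_sub, conjTensor_smul, conjTensor_cplxExt, h2]
  simp [sub_eq_add_neg, neg_smul]

lemma E10_E01_indep {j : E →ₗ[ℝ] E} (hj : IsCplxStruct j) {a b : ℂ ⊗[ℝ] E}
    (ha : a ∈ E10 j) (hb : b ∈ E01 j) (h : a + b = 0) : a = 0 := by
  rw [mem_E10] at ha
  rw [mem_E01] at hb
  have h2 : cplxExt j (a + b) = 0 := by rw [h, map_zero]
  rw [map_add, ha, hb] at h2
  have hb' : b = -a := eq_neg_of_add_eq_zero_right h
  rw [hb'] at h2
  have h3 : ((2 : ℂ) * Complex.I) • a = 0 := by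
    rw [two_mul, add_smul]
    rw [smul_neg, neg_smul, neg_neg] at h2
    exact h2
  rcases smul_eq_zero.mp h3 with h4 | h4
  · exact absurd h4 (by simp [Complex.ext_iff])
  · exact h4

lemma extendC_cplxExt_of_mem10 {j : E →ₗ[ℝ] E} {α : E →ₗ[ℝ] ℂ} (hα : α ∈ Lam10 j)
    (v : ℂ ⊗[ℝ] E) : extendC α (cplxExt j v) = Complex.I * extendC α v := by
  induction v using TensorProduct.induction_on with
  | zero => simp
  | tmul a x => simp [hα x]; ring
  | add u w hu hw => simp only [map_add, hu, hw]; ring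

lemma extendC_cplxExt_of_mem01 {j : E →ₗ[ℝ] E} {α : E →ₗ[ℝ] ℂ} (hα : α ∈ Lam01 j)
    (v : ℂ ⊗[ℝ] E) : extendC α (cplxExt j v) = -(Complex.I * extendC α v) := by
  induction v using TensorProduct.induction_on with
  | zero => simp
  | tmul a x => simp [hα x]; ring
  | add u w hu hw => simp only [map_add, hu, hw]; ring

lemma extendC_zero_of_10_01 {j : E →ₗ[ℝ] E} {α : E →ₗ[ℝ] ℂ} (hα : α ∈ Lam10 j)
    {w : ℂ ⊗[ℝ] E} (hw : w ∈ E01 j) : extendC α w = 0 := by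
  have h1 := extendC_cplxExt_of_mem10 hα w
  rw [mem_E01] at hw
  rw [hw, map_smul] at h1
  have h2 : (2 * Complex.I) * extendC α w = 0 := by
    rw [smul_eq_mul] at h1
    linear_combination -h1
  rcases mul_eq_zero.mp h2 with h | h
  · exact absurd h (by simp [Complex.ext_iff])
  · exact h

lemma extendC_zero_of_01_10 {j : E →ₗ[ℝ] E} {α : E →ₗ[ℝ] ℂ} (hα : α ∈ Lam01 j)
    {w : ℂ ⊗[ℝ] E} (hw : w ∈ E10 j) : extendC α w = 0 := by
  have h1 := extendC_cplxExt_of_mem01 hα w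
  rw [mem_E10] at hw
  rw [hw, map_smul] at h1
  have h2 : (2 * Complex.I) * extendC α w = 0 := by
    rw [smul_eq_mul] at h1
    linear_combination h1
  rcases mul_eq_zero.mp h2 with h | h
  · exact absurd h (by simp [Complex.ext_iff])
  · exact h

@[simp] lemma conjForm_apply (α : E →ₗ[ℝ] ℂ) (x : E) :
    conjForm α x = (starRingEnd ℂ) (α x) := rfl

lemma conjForm_conjForm (α : E →ₗ[ℝ] ℂ) : conjForm (conjForm α) = α := by
  ext x; simp

lemma conjForm_mem_Lam10 {j : E →ₗ[ℝ] E} {α : E →ₗ[ℝ] ℂ} (hα : α ∈ Lam01 j) :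
    conjForm α ∈ Lam10 j := by
  intro x
  simp [hα x, Complex.conj_I]

lemma conjForm_mem_Lam01 {j : E →ₗ[ℝ] E} {α : E →ₗ[ℝ] ℂ} (hα : α ∈ Lam10 j) :
    conjForm α ∈ Lam01 j := by
  intro x
  simp [hα x, Complex.conj_I]
  try ring

lemma extendC_conjForm (α : E →ₗ[ℝ] ℂ) (v : ℂ ⊗[ℝ] E) :
    extendC (conjForm α) v = (starRingEnd ℂ) (extendC α (conjTensor v)) := by
  induction v using TensorProduct.induction_on with
  | zero => simp
  | tmul c x => simp
  | add u w hu hw => simp [map_add, hu, hw]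

lemma extendC_conjTensor (α : E →ₗ[ℝ] ℂ) (v : ℂ ⊗[ℝ] E) :
    extendC α (conjTensor v) = (starRingEnd ℂ) (extendC (conjForm α) v) := by
  rw [extendC_conjForm, Complex.conj_conj]

end Helpers

section Helpers2

variable {E : Type*} [AddCommGroup E] [Module ℝ E]

lemma forms_separate [FiniteDimensional ℝ E] {v : ℂ ⊗[ℝ] E}
    (h : ∀ β : E →ₗ[ℝ] ℂ, extendC β v = 0) : v = 0 := by
  classical
  let b := Module.finBasis ℝ E
  let bC := b.baseChange ℂ
  have key : ∀ i, bC.repr v i = 0 := by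
    intro i
    let β : E →ₗ[ℝ] ℂ := (Algebra.linearMap ℝ ℂ) ∘ₗ (b.coord i)
    have aux : ∀ w : ℂ ⊗[ℝ] E, extendC β w = bC.repr w i := by
      intro w
      induction w using TensorProduct.induction_on with
      | zero => simp
      | tmul c x =>
        simp [β, bC, Module.Basis.baseChange_repr_tmul, Algebra.smul_def, mul_comm]
      | add u w hu hw => simp [map_add, hu, hw]
    rw [← aux v]
    exact h β
  have hz : bC.repr v = 0 := Finsupp.ext key
  exact bC.repr.map_eq_zero_iff.mp hz

/-- decomposition of a form into `(1,0)` and `(0,1)` parts -/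
lemma form_decomp {j : E →ₗ[ℝ] E} (hj : IsCplxStruct j) (β : E →ₗ[ℝ] ℂ) :
    ∃ β₁ β₂ : E →ₗ[ℝ] ℂ, β₁ ∈ Lam10 j ∧ β₂ ∈ Lam01 j ∧ β = β₁ + β₂ := by
  refine ⟨(2⁻¹ : ℂ) • (β - Complex.I • (β ∘ₗ j)), (2⁻¹ : ℂ) • (β + Complex.I • (β ∘ₗ j)),
    ?_, ?_, ?_⟩
  · intro x
    simp only [LinearMap.smul_apply, LinearMap.sub_apply, LinearMap.comp_apply,
      smul_eq_mul, hj x, map_neg]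
    linear_combination (2⁻¹ * β (j x)) * Complex.I_mul_I
  · intro x
    simp only [LinearMap.smul_apply, LinearMap.add_apply, LinearMap.comp_apply,
      smul_eq_mul, hj x, map_neg]
    linear_combination (2⁻¹ * β (j x)) * Complex.I_mul_I
  · ext x
    simp only [LinearMap.add_apply, LinearMap.smul_apply, LinearMap.sub_apply,
      LinearMap.comp_apply, smul_eq_mul]
    ring

lemma sep_E10 [FiniteDimensional ℝ E] {j : E →ₗ[ℝ] E} (hj : IsCplxStruct j)
    {w : ℂ ⊗[ℝ] E} (hw : w ∈ E10 j)
    (h : ∀ α : E →ₗ[ℝ] ℂ, α ∈ Lam10 j → extendC α w = 0) : w = 0 := by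
  apply forms_separate
  intro β
  obtain ⟨β₁, β₂, h1, h2, hβ⟩ := form_decomp hj β
  rw [hβ, extendC_add, h β₁ h1, extendC_zero_of_01_10 h2 hw, add_zero]

lemma sep_E01 [FiniteDimensional ℝ E] {j : E →ₗ[ℝ] E} (hj : IsCplxStruct j)
    {w : ℂ ⊗[ℝ] E} (hw : w ∈ E01 j)
    (h : ∀ α : E →ₗ[ℝ] ℂ, α ∈ Lam01 j → extendC α w = 0) : w = 0 := by
  apply forms_separate
  intro β
  obtain ⟨β₁, β₂, h1, h2, hβ⟩ := form_decomp hj β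
  rw [hβ, extendC_add, h β₂ h2, extendC_zero_of_10_01 h1 hw, add_zero]

/-- real part of an element of the complexification -/
def rePart : ℂ ⊗[ℝ] E →ₗ[ℝ] E :=
  TensorProduct.lift ((LinearMap.lsmul ℝ E) ∘ₗ Complex.reLm)

/-- imaginary part of an element of the complexification -/
def imPart : ℂ ⊗[ℝ] E →ₗ[ℝ] E :=
  TensorProduct.lift ((LinearMap.lsmul ℝ E) ∘ₗ Complex.imLm)

@[simp] lemma rePart_tmul (c : ℂ) (x : E) : rePart (c ⊗ₜ[ℝ] x) = c.re • x := rfl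
@[simp] lemma imPart_tmul (c : ℂ) (x : E) : imPart (c ⊗ₜ[ℝ] x) = c.im • x := rfl

lemma tensor_re_im (v : ℂ ⊗[ℝ] E) :
    v = (1 : ℂ) ⊗ₜ[ℝ] rePart v + Complex.I • ((1 : ℂ) ⊗ₜ[ℝ] imPart v) := by
  induction v using TensorProduct.induction_on with
  | zero => simp
  | tmul c x =>
    rw [rePart_tmul, imPart_tmul, TensorProduct.tmul_smul, TensorProduct.tmul_smul]
    rw [smul_comm]
    simp only [TensorProduct.smul_tmul']
    rw [← TensorProduct.add_tmul]
    congr 1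
    simp [Complex.ext_iff]
  | add u w hu hw =>
    rw [map_add, map_add, TensorProduct.tmul_add, TensorProduct.tmul_add, smul_add]
    calc u + w = ((1:ℂ) ⊗ₜ[ℝ] rePart u + Complex.I • (1:ℂ) ⊗ₜ[ℝ] imPart u)
        + ((1:ℂ) ⊗ₜ[ℝ] rePart w + Complex.I • (1:ℂ) ⊗ₜ[ℝ] imPart w) := by rw [← hu, ← hw]
      _ = _ := by abel

lemma conjTensor_re_im (v : ℂ ⊗[ℝ] E) :
    conjTensor v = (1 : ℂ) ⊗ₜ[ℝ] rePart v - Complex.I • ((1 : ℂ) ⊗ₜ[ℝ] imPart v) := by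
  conv_lhs => rw [tensor_re_im v]
  rw [map_add, conjTensor_smul]
  simp [Complex.conj_I, sub_eq_add_neg, neg_smul]

lemma eq_one_tmul_of_conj_eq {v : ℂ ⊗[ℝ] E} (h : conjTensor v = v) :
    v = (1 : ℂ) ⊗ₜ[ℝ] rePart v := by
  have h1 := tensor_re_im v
  have h2 := conjTensor_re_im v
  rw [h] at h2
  have h3 : Complex.I • ((1:ℂ) ⊗ₜ[ℝ] imPart v) + Complex.I • ((1:ℂ) ⊗ₜ[ℝ] imPart v) = 0 := by
    have := h1.symm.trans h2
    rw [sub_eq_add_neg] at this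
    have h4 := add_left_cancel this
    nth_rewrite 2 [h4]
    simp
  have h5 : ((2 : ℂ) * Complex.I) • ((1:ℂ) ⊗ₜ[ℝ] imPart v) = 0 := by
    rw [two_mul, add_smul]; exact h3
  rcases smul_eq_zero.mp h5 with h6 | h6
  · exact absurd h6 (by simp [Complex.ext_iff])
  · rw [h6, smul_zero, add_zero] at h1
    exact h1

end Helpers2

section Helpers3

variable {E : Type*} [AddCommGroup E] [Module ℝ E]

@[simp] lemma omC_tmul (ω : LinearMap.BilinForm ℝ E) (a b : ℂ) (x y : E) :
    omC ω (a ⊗ₜ[ℝ] x) (b ⊗ₜ[ℝ] y) = (ω x y : ℝ) • (a * b) :=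
  LinearMap.BilinForm.baseChange_tmul ω a x b y

lemma omC_skew {ω : LinearMap.BilinForm ℝ E} (halt : OmAlt ω) (v w : ℂ ⊗[ℝ] E) :
    omC ω v w = - omC ω w v := by
  have hsk : ∀ x y : E, ω x y = - ω y x := by
    intro x y
    have h := halt (x + y)
    simp only [map_add, LinearMap.add_apply, halt x, halt y] at h
    linarith
  induction v using TensorProduct.induction_on with
  | zero => simp
  | tmul a x =>
    induction w using TensorProduct.induction_on with
    | zero => simp
    | tmul b y =>
      rw [omC_tmul, omC_tmul, hsk x y]
      push_cast [Complex.real_smul]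
      ring
    | add w₁ w₂ h1 h2 => simp only [map_add, LinearMap.add_apply, h1, h2]; ring
  | add v₁ v₂ h1 h2 => simp only [map_add, LinearMap.add_apply, h1, h2]; ring

lemma omC_cplxExt {ω : LinearMap.BilinForm ℝ E} {j : E →ₗ[ℝ] E} (hc : OmCompat ω j)
    (v w : ℂ ⊗[ℝ] E) : omC ω (cplxExt j v) (cplxExt j w) = omC ω v w := by
  induction v using TensorProduct.induction_on with
  | zero => simp
  | tmul a x =>
    induction w using TensorProduct.induction_on with
    | zero => simp
    | tmul b y => rw [cplxExt_tmul, cplxExt_tmul, omC_tmul, omC_tmul, hc x y]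
    | add w₁ w₂ h1 h2 => simp only [map_add, LinearMap.add_apply, h1, h2]
  | add v₁ v₂ h1 h2 => simp only [map_add, LinearMap.add_apply, h1, h2]

lemma omC_eigen_zero {ω : LinearMap.BilinForm ℝ E} {j : E →ₗ[ℝ] E} (hc : OmCompat ω j)
    {c : ℂ} (hcc : c * c = -1) {v w : ℂ ⊗[ℝ] E}
    (hv : cplxExt j v = c • v) (hw : cplxExt j w = c • w) : omC ω v w = 0 := by
  have h1 : omC ω (c • v) (c • w) = omC ω v w := by
    rw [← hv, ← hw]; exact omC_cplxExt hc v w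
  have hs : omC ω (c • v) (c • w) = (c * c) * omC ω v w := by
    simp only [map_smul, LinearMap.smul_apply, smul_eq_mul]; ring
  have h2 : (2 : ℂ) * omC ω v w = 0 := by
    rw [hs, hcc] at h1; linear_combination -h1
  rcases mul_eq_zero.mp h2 with h3 | h3
  · exact absurd h3 two_ne_zero
  · exact h3

lemma omC_zero_E10 {ω : LinearMap.BilinForm ℝ E} {j : E →ₗ[ℝ] E} (hc : OmCompat ω j)
    {v w : ℂ ⊗[ℝ] E} (hv : v ∈ E10 j) (hw : w ∈ E10 j) : omC ω v w = 0 :=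
  omC_eigen_zero hc Complex.I_mul_I (mem_E10.mp hv) (mem_E10.mp hw)

lemma omC_zero_E01 {ω : LinearMap.BilinForm ℝ E} {j : E →ₗ[ℝ] E} (hc : OmCompat ω j)
    {v w : ℂ ⊗[ℝ] E} (hv : v ∈ E01 j) (hw : w ∈ E01 j) : omC ω v w = 0 := by
  refine omC_eigen_zero hc (c := -Complex.I) ?_ (mem_E01.mp hv) (mem_E01.mp hw)
  simp [Complex.I_mul_I]

end Helpers3

set_option maxHeartbeats 1000000 in
/-- `j` is positive iff `Id − μᵗ ∘ μ̄ᵗ` is positive definite for the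
Hermitian inner product `h(X, Y) := −i·ω(X, Ȳ)` on `E^{1,0}_{j₀}`. -/
theorem statement9 {E : Type*} [AddCommGroup E] [Module ℝ E] [FiniteDimensional ℝ E]
    (n : ℕ) (hn : 0 < n) (ω : LinearMap.BilinForm ℝ E)
    (hdim : Module.finrank ℝ E = 2 * n)
    (halt : OmAlt ω) (hnd : OmNondeg ω)
    (j₀ : E →ₗ[ℝ] E) (hj₀ : IsCplxStruct j₀)
    (hc₀ : OmCompat ω j₀) (hp₀ : OmPos ω j₀)
    (j : E →ₗ[ℝ] E) (hj : IsCplxStruct j) (hc : OmCompat ω j)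
    -- `Λ^{1,0}_j E*` is the graph of `μ : Λ^{1,0}_{j₀}E* → Λ^{0,1}_{j₀}E*`
    (μ : Lam10 j₀ →ₗ[ℂ] Lam01 j₀)
    (hgraph : ∀ γ : E →ₗ[ℝ] ℂ, γ ∈ Lam10 j ↔
      ∃ α : Lam10 j₀, γ = (α : E →ₗ[ℝ] ℂ) + ((μ α : E →ₗ[ℝ] ℂ)))
    -- the conjugate map `μ̄ : Λ^{0,1}_{j₀}E* → Λ^{1,0}_{j₀}E*`, `μ̄(α) = conj (μ (conj α))`
    (μbar : Lam01 j₀ →ₗ[ℂ] Lam10 j₀)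
    (hμbar : ∀ (α : Lam01 j₀) (β : Lam10 j₀),
      (β : E →ₗ[ℝ] ℂ) = conjForm (α : E →ₗ[ℝ] ℂ) →
        ((μbar α : E →ₗ[ℝ] ℂ)) = conjForm ((μ β : E →ₗ[ℝ] ℂ)))
    -- the transposes `μᵗ : E^{0,1}_{j₀} → E^{1,0}_{j₀}` and `μ̄ᵗ : E^{1,0}_{j₀} → E^{0,1}_{j₀}`
    (μt : E01 j₀ →ₗ[ℂ] E10 j₀)
    (hμt : ∀ (α : Lam10 j₀) (X : E01 j₀),
      extendC (α : E →ₗ[ℝ] ℂ) ((μt X : ℂ ⊗[ℝ] E)) =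
        extendC ((μ α : E →ₗ[ℝ] ℂ)) ((X : ℂ ⊗[ℝ] E)))
    (μbart : E10 j₀ →ₗ[ℂ] E01 j₀)
    (hμbart : ∀ (β : Lam01 j₀) (X : E10 j₀),
      extendC (β : E →ₗ[ℝ] ℂ) ((μbart X : ℂ ⊗[ℝ] E)) =
        extendC ((μbar β : E →ₗ[ℝ] ℂ)) ((X : ℂ ⊗[ℝ] E))) :
    OmPos ω j ↔
      ∀ X : E10 j₀, (X : ℂ ⊗[ℝ] E) ≠ 0 →
        ∃ r : ℝ, 0 < r ∧
          -Complex.I *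
            omC ω ((X : ℂ ⊗[ℝ] E) - ((μt (μbart X) : ℂ ⊗[ℝ] E)))
              (conjTensor (X : ℂ ⊗[ℝ] E)) = (r : ℂ) := by
  classical
  -- Step A: conjugation intertwines the two transposes
  have conj_mubart : ∀ X : E10 j₀,
      conjTensor ((μbart X : ℂ ⊗[ℝ] E)) =
        ((μt ⟨conjTensor (X : ℂ ⊗[ℝ] E), conjTensor_mem_E01 X.2⟩ : ℂ ⊗[ℝ] E)) := by
    intro X
    have hmem : conjTensor ((μbart X : ℂ ⊗[ℝ] E)) -
        ((μt ⟨conjTensor (X : ℂ ⊗[ℝ] E), conjTensor_mem_E01 X.2⟩ : ℂ ⊗[ℝ] E)) ∈ E10 j₀ :=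
      Submodule.sub_mem _ (conjTensor_mem_E10 (μbart X).2)
        (μt ⟨conjTensor (X : ℂ ⊗[ℝ] E), conjTensor_mem_E01 X.2⟩).2
    have hz : conjTensor ((μbart X : ℂ ⊗[ℝ] E)) -
        ((μt ⟨conjTensor (X : ℂ ⊗[ℝ] E), conjTensor_mem_E01 X.2⟩ : ℂ ⊗[ℝ] E)) = 0 := by
      apply sep_E10 hj₀ hmem
      intro α hα
      rw [map_sub]
      have e1 : extendC α (conjTensor ((μbart X : ℂ ⊗[ℝ] E)))
          = (starRingEnd ℂ) (extendC (conjForm α) ((μbart X : ℂ ⊗[ℝ] E))) :=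
        extendC_conjTensor α _
      have e2 : extendC (conjForm α) ((μbart X : ℂ ⊗[ℝ] E))
          = extendC ((μbar ⟨conjForm α, conjForm_mem_Lam01 hα⟩ : E →ₗ[ℝ] ℂ)) (X : ℂ ⊗[ℝ] E) :=
        hμbart ⟨conjForm α, conjForm_mem_Lam01 hα⟩ X
      have e3 : ((μbar ⟨conjForm α, conjForm_mem_Lam01 hα⟩ : E →ₗ[ℝ] ℂ))
          = conjForm ((μ ⟨α, hα⟩ : E →ₗ[ℝ] ℂ)) := by
        apply hμbar ⟨conjForm α, conjForm_mem_Lam01 hα⟩ ⟨α, hα⟩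
        exact (conjForm_conjForm α).symm
      have e4 : extendC (conjForm ((μ ⟨α, hα⟩ : E →ₗ[ℝ] ℂ))) (X : ℂ ⊗[ℝ] E)
          = (starRingEnd ℂ) (extendC ((μ ⟨α, hα⟩ : E →ₗ[ℝ] ℂ)) (conjTensor (X : ℂ ⊗[ℝ] E))) :=
        extendC_conjForm _ _
      have e5 : extendC α ((μt ⟨conjTensor (X : ℂ ⊗[ℝ] E), conjTensor_mem_E01 X.2⟩ : ℂ ⊗[ℝ] E))
          = extendC ((μ ⟨α, hα⟩ : E →ₗ[ℝ] ℂ))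
              ((⟨conjTensor (X : ℂ ⊗[ℝ] E), conjTensor_mem_E01 X.2⟩ : E01 j₀) : ℂ ⊗[ℝ] E) :=
        hμt ⟨α, hα⟩ _
      rw [e1, e2, e3, e4, e5, Complex.conj_conj]
      exact sub_self _
    exact sub_eq_zero.mp hz
  -- Step B2: vectors of graph form lie in `E10 j`
  have memB : ∀ X : E10 j₀, ((X : ℂ ⊗[ℝ] E) - ((μbart X : ℂ ⊗[ℝ] E))) ∈ E10 j := by
    intro X
    have hconjZ : conjTensor ((X : ℂ ⊗[ℝ] E) - ((μbart X : ℂ ⊗[ℝ] E)))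
        = conjTensor (X : ℂ ⊗[ℝ] E) -
          ((μt ⟨conjTensor (X : ℂ ⊗[ℝ] E), conjTensor_mem_E01 X.2⟩ : ℂ ⊗[ℝ] E)) := by
      rw [map_sub, conj_mubart X]
    have hp01 : p01 j ((X : ℂ ⊗[ℝ] E) - ((μbart X : ℂ ⊗[ℝ] E))) = 0 := by
      apply sep_E01 hj (p01_mem hj _)
      intro γ hγ
      obtain ⟨α, hα⟩ := (hgraph (conjForm γ)).mp (conjForm_mem_Lam10 hγ)
      have hinner : extendC ((α : E →ₗ[ℝ] ℂ) + ((μ α : E →ₗ[ℝ] ℂ)))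
          (conjTensor ((X : ℂ ⊗[ℝ] E) - ((μbart X : ℂ ⊗[ℝ] E)))) = 0 := by
        rw [extendC_add, hconjZ, map_sub, map_sub,
          extendC_zero_of_10_01 α.2 (conjTensor_mem_E01 X.2),
          extendC_zero_of_01_10 (μ α).2
            (μt ⟨conjTensor (X : ℂ ⊗[ℝ] E), conjTensor_mem_E01 X.2⟩).2,
          hμt α ⟨conjTensor (X : ℂ ⊗[ℝ] E), conjTensor_mem_E01 X.2⟩]
        ring
      have hZ0 : extendC γ ((X : ℂ ⊗[ℝ] E) - ((μbart X : ℂ ⊗[ℝ] E))) = 0 := by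
        conv_lhs => rw [(conjForm_conjForm γ).symm]
        rw [extendC_conjForm, hα, hinner, map_zero]
      have hsplit : extendC γ ((X : ℂ ⊗[ℝ] E) - ((μbart X : ℂ ⊗[ℝ] E)))
          = extendC γ (p10 j ((X : ℂ ⊗[ℝ] E) - ((μbart X : ℂ ⊗[ℝ] E))))
            + extendC γ (p01 j ((X : ℂ ⊗[ℝ] E) - ((μbart X : ℂ ⊗[ℝ] E)))) := by
        conv_lhs => rw [← p_decomp j ((X : ℂ ⊗[ℝ] E) - ((μbart X : ℂ ⊗[ℝ] E)))]
        rw [map_add]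
      rw [hsplit, extendC_zero_of_01_10 hγ (p10_mem hj _), zero_add] at hZ0
      exact hZ0
    have heq : ((X : ℂ ⊗[ℝ] E) - ((μbart X : ℂ ⊗[ℝ] E)))
        = p10 j ((X : ℂ ⊗[ℝ] E) - ((μbart X : ℂ ⊗[ℝ] E))) := by
      conv_lhs => rw [← p_decomp j ((X : ℂ ⊗[ℝ] E) - ((μbart X : ℂ ⊗[ℝ] E))), hp01]
      rw [add_zero]
    rw [heq]
    exact p10_mem hj _
  -- Step B1: every element of `E10 j` has graph form
  have repB : ∀ Z : ℂ ⊗[ℝ] E, Z ∈ E10 j →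
      ∃ X : E10 j₀, Z = (X : ℂ ⊗[ℝ] E) - ((μbart X : ℂ ⊗[ℝ] E)) := by
    intro Z hZ
    refine ⟨⟨p10 j₀ Z, p10_mem hj₀ Z⟩, ?_⟩
    have hdecomp : Z = p10 j₀ Z + p01 j₀ Z := (p_decomp j₀ Z).symm
    have hkey : conjTensor (p01 j₀ Z) +
        ((μt ⟨conjTensor (p10 j₀ Z), conjTensor_mem_E01 (p10_mem hj₀ Z)⟩ : ℂ ⊗[ℝ] E)) = 0 := by
      apply sep_E10 hj₀ (Submodule.add_mem _ (conjTensor_mem_E10 (p01_mem hj₀ Z))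
        (μt ⟨conjTensor (p10 j₀ Z), conjTensor_mem_E01 (p10_mem hj₀ Z)⟩).2)
      intro α hα
      have hδ : ((⟨α, hα⟩ : Lam10 j₀) : E →ₗ[ℝ] ℂ) + ((μ ⟨α, hα⟩ : E →ₗ[ℝ] ℂ)) ∈ Lam10 j :=
        (hgraph _).mpr ⟨⟨α, hα⟩, rfl⟩
      have h0 : extendC (conjForm (((⟨α, hα⟩ : Lam10 j₀) : E →ₗ[ℝ] ℂ)
          + ((μ ⟨α, hα⟩ : E →ₗ[ℝ] ℂ)))) Z = 0 :=
        extendC_zero_of_01_10 (conjForm_mem_Lam01 hδ) hZ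
      rw [extendC_conjForm] at h0
      have h0' : extendC (((⟨α, hα⟩ : Lam10 j₀) : E →ₗ[ℝ] ℂ)
          + ((μ ⟨α, hα⟩ : E →ₗ[ℝ] ℂ))) (conjTensor Z) = 0 := by
        have := congrArg (starRingEnd ℂ) h0
        simpa using this
      have hcz : conjTensor Z = conjTensor (p10 j₀ Z) + conjTensor (p01 j₀ Z) := by
        conv_lhs => rw [hdecomp]
        rw [map_add]
      rw [hcz, extendC_add, map_add, map_add,
        extendC_zero_of_10_01 hα (conjTensor_mem_E01 (p10_mem hj₀ Z)),
        extendC_zero_of_01_10 (μ ⟨α, hα⟩).2 (conjTensor_mem_E10 (p01_mem hj₀ Z))] at h0'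
      rw [map_add, hμt ⟨α, hα⟩ ⟨conjTensor (p10 j₀ Z), conjTensor_mem_E01 (p10_mem hj₀ Z)⟩]
      linear_combination h0'
    have h1 : conjTensor (p01 j₀ Z)
        = -((μt ⟨conjTensor (p10 j₀ Z), conjTensor_mem_E01 (p10_mem hj₀ Z)⟩ : ℂ ⊗[ℝ] E)) :=
      eq_neg_of_add_eq_zero_left hkey
    have h2 : p01 j₀ Z = conjTensor
        (-((μt ⟨conjTensor (p10 j₀ Z), conjTensor_mem_E01 (p10_mem hj₀ Z)⟩ : ℂ ⊗[ℝ] E))) := by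
      rw [← h1, conjTensor_conjTensor]
    rw [map_neg] at h2
    have h3 : conjTensor ((μt ⟨conjTensor (p10 j₀ Z),
          conjTensor_mem_E01 (p10_mem hj₀ Z)⟩ : ℂ ⊗[ℝ] E))
        = ((μbart ⟨p10 j₀ Z, p10_mem hj₀ Z⟩ : ℂ ⊗[ℝ] E)) := by
      rw [← conj_mubart ⟨p10 j₀ Z, p10_mem hj₀ Z⟩, conjTensor_conjTensor]
    rw [h3] at h2
    show Z = p10 j₀ Z - ((μbart ⟨p10 j₀ Z, p10_mem hj₀ Z⟩ : ℂ ⊗[ℝ] E))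
    calc Z = p10 j₀ Z + p01 j₀ Z := hdecomp
      _ = p10 j₀ Z + -((μbart ⟨p10 j₀ Z, p10_mem hj₀ Z⟩ : ℂ ⊗[ℝ] E)) := by rw [h2]
      _ = p10 j₀ Z - ((μbart ⟨p10 j₀ Z, p10_mem hj₀ Z⟩ : ℂ ⊗[ℝ] E)) :=
          (sub_eq_add_neg _ _).symm
  -- Step C: symmetry relation coming from compatibility of `j`
  have memE01j : ∀ Wk : E01 j₀, ((Wk : ℂ ⊗[ℝ] E) - ((μt Wk : ℂ ⊗[ℝ] E))) ∈ E01 j := by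
    intro Wk
    obtain ⟨Xv, hXv⟩ : ∃ X : E10 j₀, (X : ℂ ⊗[ℝ] E) = conjTensor (Wk : ℂ ⊗[ℝ] E) :=
      ⟨⟨conjTensor (Wk : ℂ ⊗[ℝ] E), conjTensor_mem_E10 Wk.2⟩, rfl⟩
    have hs : (⟨conjTensor (Xv : ℂ ⊗[ℝ] E), conjTensor_mem_E01 Xv.2⟩ : E01 j₀) = Wk := by
      apply Subtype.ext
      show conjTensor (Xv : ℂ ⊗[ℝ] E) = (Wk : ℂ ⊗[ℝ] E)
      rw [hXv, conjTensor_conjTensor]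
    have h1 : conjTensor ((Xv : ℂ ⊗[ℝ] E) - ((μbart Xv : ℂ ⊗[ℝ] E)))
        = (Wk : ℂ ⊗[ℝ] E) - ((μt Wk : ℂ ⊗[ℝ] E)) := by
      rw [map_sub, conj_mubart Xv, hs, hXv, conjTensor_conjTensor]
    rw [← h1]
    exact conjTensor_mem_E01 (memB Xv)
  have symmlem : ∀ W₁ W₂ : E01 j₀,
      omC ω (W₁ : ℂ ⊗[ℝ] E) ((μt W₂ : ℂ ⊗[ℝ] E))
        + omC ω ((μt W₁ : ℂ ⊗[ℝ] E)) (W₂ : ℂ ⊗[ℝ] E) = 0 := by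
    intro W₁ W₂
    have h0 : omC ω ((W₁ : ℂ ⊗[ℝ] E) - ((μt W₁ : ℂ ⊗[ℝ] E)))
        ((W₂ : ℂ ⊗[ℝ] E) - ((μt W₂ : ℂ ⊗[ℝ] E))) = 0 :=
      omC_zero_E01 hc (memE01j W₁) (memE01j W₂)
    have e1 : omC ω (W₁ : ℂ ⊗[ℝ] E) (W₂ : ℂ ⊗[ℝ] E) = 0 := omC_zero_E01 hc₀ W₁.2 W₂.2
    have e2 : omC ω ((μt W₁ : ℂ ⊗[ℝ] E)) ((μt W₂ : ℂ ⊗[ℝ] E)) = 0 :=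
      omC_zero_E10 hc₀ (μt W₁).2 (μt W₂).2
    simp only [map_sub, LinearMap.sub_apply] at h0
    linear_combination e1 + e2 - h0
  -- Step D: the key identity
  have keyid : ∀ X : E10 j₀,
      omC ω ((X : ℂ ⊗[ℝ] E) - ((μbart X : ℂ ⊗[ℝ] E)))
          (conjTensor ((X : ℂ ⊗[ℝ] E) - ((μbart X : ℂ ⊗[ℝ] E))))
        = omC ω ((X : ℂ ⊗[ℝ] E) - ((μt (μbart X) : ℂ ⊗[ℝ] E)))
            (conjTensor (X : ℂ ⊗[ℝ] E)) := by
    intro X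
    have hconj : conjTensor ((X : ℂ ⊗[ℝ] E) - ((μbart X : ℂ ⊗[ℝ] E)))
        = ((⟨conjTensor (X : ℂ ⊗[ℝ] E), conjTensor_mem_E01 X.2⟩ : E01 j₀) : ℂ ⊗[ℝ] E)
          - ((μt ⟨conjTensor (X : ℂ ⊗[ℝ] E), conjTensor_mem_E01 X.2⟩ : ℂ ⊗[ℝ] E)) := by
      rw [map_sub, conj_mubart X]
    rw [hconj]
    have e1 : omC ω (X : ℂ ⊗[ℝ] E)
        ((μt ⟨conjTensor (X : ℂ ⊗[ℝ] E), conjTensor_mem_E01 X.2⟩ : ℂ ⊗[ℝ] E)) = 0 :=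
      omC_zero_E10 hc₀ X.2 (μt _).2
    have e2 : omC ω ((μbart X : ℂ ⊗[ℝ] E))
        (((⟨conjTensor (X : ℂ ⊗[ℝ] E), conjTensor_mem_E01 X.2⟩ : E01 j₀) : ℂ ⊗[ℝ] E)) = 0 :=
      omC_zero_E01 hc₀ (μbart X).2 (conjTensor_mem_E01 X.2)
    have e3 := symmlem (μbart X) ⟨conjTensor (X : ℂ ⊗[ℝ] E), conjTensor_mem_E01 X.2⟩
    have hWc : ((⟨conjTensor (X : ℂ ⊗[ℝ] E), conjTensor_mem_E01 X.2⟩ : E01 j₀) : ℂ ⊗[ℝ] E)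
        = conjTensor (X : ℂ ⊗[ℝ] E) := rfl
    simp only [map_sub, LinearMap.sub_apply]
    rw [hWc] at e2 e3
    linear_combination e3 - e1 - e2
  -- Step E: relating `ω x (j x)` with `omC`
  have omega_formula : ∀ (x : E) (Z : ℂ ⊗[ℝ] E), Z ∈ E10 j →
      (1 : ℂ) ⊗ₜ[ℝ] x = Z + conjTensor Z →
      ((ω x (j x) : ℝ) : ℂ) = -(2 * Complex.I) * omC ω Z (conjTensor Z) := by
    intro x Z hZ hx
    have h1 : ((ω x (j x) : ℝ) : ℂ) = omC ω ((1 : ℂ) ⊗ₜ[ℝ] x) ((1 : ℂ) ⊗ₜ[ℝ] (j x)) := by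
      rw [omC_tmul, mul_one, Complex.real_smul, mul_one]
    have h2 : ((1 : ℂ) ⊗ₜ[ℝ] (j x) : ℂ ⊗[ℝ] E) = cplxExt j ((1 : ℂ) ⊗ₜ[ℝ] x) := rfl
    rw [h2, hx] at h1
    have hZc := conjTensor_mem_E01 hZ
    have hJ : cplxExt j (Z + conjTensor Z)
        = Complex.I • Z + (-Complex.I) • conjTensor Z := by
      rw [map_add, mem_E10.mp hZ, mem_E01.mp hZc]
    rw [hJ] at h1
    have hzz : omC ω Z Z = 0 := omC_zero_E10 hc hZ hZ
    have hcc2 : omC ω (conjTensor Z) (conjTensor Z) = 0 := omC_zero_E01 hc hZc hZc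
    have hsk : omC ω (conjTensor Z) Z = - omC ω Z (conjTensor Z) := omC_skew halt _ _
    simp only [map_add, map_smul, LinearMap.add_apply, LinearMap.smul_apply,
      smul_eq_mul] at h1
    rw [hzz, hcc2, hsk] at h1
    rw [h1]; ring
  -- Final assembly
  constructor
  · intro hpos X hX
    have hZmem : ((X : ℂ ⊗[ℝ] E) - ((μbart X : ℂ ⊗[ℝ] E))) ∈ E10 j := memB X
    have hvconj : conjTensor (((X : ℂ ⊗[ℝ] E) - ((μbart X : ℂ ⊗[ℝ] E)))
        + conjTensor ((X : ℂ ⊗[ℝ] E) - ((μbart X : ℂ ⊗[ℝ] E))))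
        = ((X : ℂ ⊗[ℝ] E) - ((μbart X : ℂ ⊗[ℝ] E)))
          + conjTensor ((X : ℂ ⊗[ℝ] E) - ((μbart X : ℂ ⊗[ℝ] E))) := by
      rw [map_add, conjTensor_conjTensor, add_comm]
    have hxv : (((X : ℂ ⊗[ℝ] E) - ((μbart X : ℂ ⊗[ℝ] E)))
        + conjTensor ((X : ℂ ⊗[ℝ] E) - ((μbart X : ℂ ⊗[ℝ] E))))
        = (1 : ℂ) ⊗ₜ[ℝ] rePart (((X : ℂ ⊗[ℝ] E) - ((μbart X : ℂ ⊗[ℝ] E)))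
          + conjTensor ((X : ℂ ⊗[ℝ] E) - ((μbart X : ℂ ⊗[ℝ] E)))) :=
      eq_one_tmul_of_conj_eq hvconj
    set x := rePart (((X : ℂ ⊗[ℝ] E) - ((μbart X : ℂ ⊗[ℝ] E)))
      + conjTensor ((X : ℂ ⊗[ℝ] E) - ((μbart X : ℂ ⊗[ℝ] E)))) with hxdef
    have hxne : x ≠ 0 := by
      intro h0
      apply hX
      have hv0 : (((X : ℂ ⊗[ℝ] E) - ((μbart X : ℂ ⊗[ℝ] E)))
          + conjTensor ((X : ℂ ⊗[ℝ] E) - ((μbart X : ℂ ⊗[ℝ] E)))) = 0 := by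
        rw [hxv, h0, TensorProduct.tmul_zero]
      have hZ0 : ((X : ℂ ⊗[ℝ] E) - ((μbart X : ℂ ⊗[ℝ] E))) = 0 :=
        E10_E01_indep hj hZmem (conjTensor_mem_E01 hZmem) hv0
      have : (X : ℂ ⊗[ℝ] E) + (-((μbart X : ℂ ⊗[ℝ] E))) = 0 := by
        rw [← sub_eq_add_neg]; exact hZ0
      exact E10_E01_indep hj₀ X.2 (Submodule.neg_mem _ (μbart X).2) this
    have hωpos := hpos x hxne
    have hωc := omega_formula x _ hZmem hxv.symm
    refine ⟨ω x (j x) / 2, by positivity, ?_⟩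
    rw [← keyid X]
    rw [Complex.ofReal_div, Complex.ofReal_ofNat]
    rw [hωc]
    ring
  · intro hpd x hx
    have hvconj : conjTensor ((1 : ℂ) ⊗ₜ[ℝ] x) = (1 : ℂ) ⊗ₜ[ℝ] x := by simp
    have hZmem : p10 j ((1 : ℂ) ⊗ₜ[ℝ] x) ∈ E10 j := p10_mem hj _
    have hconjZ : conjTensor (p10 j ((1 : ℂ) ⊗ₜ[ℝ] x)) = p01 j ((1 : ℂ) ⊗ₜ[ℝ] x) := by
      rw [conjTensor_p10, hvconj]
    have hv : (1 : ℂ) ⊗ₜ[ℝ] x = p10 j ((1 : ℂ) ⊗ₜ[ℝ] x)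
        + conjTensor (p10 j ((1 : ℂ) ⊗ₜ[ℝ] x)) := by
      rw [hconjZ]
      exact (p_decomp j _).symm
    obtain ⟨X, hXZ⟩ := repB _ hZmem
    have hXne : (X : ℂ ⊗[ℝ] E) ≠ 0 := by
      intro h0
      have hX0 : X = 0 := by
        exact Subtype.ext h0
      apply hx
      have : p10 j ((1 : ℂ) ⊗ₜ[ℝ] x) = 0 := by
        rw [hXZ, hX0]
        simp
      have hv0 : (1 : ℂ) ⊗ₜ[ℝ] x = (0 : ℂ ⊗[ℝ] E) := by
        rw [hv, this, map_zero, add_zero]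
      have := congrArg rePart hv0
      simpa using this
    obtain ⟨r, hr, hre⟩ := hpd X hXne
    have hωc := omega_formula x _ hZmem hv
    rw [hXZ, keyid X] at hωc
    have hfin : ((ω x (j x) : ℝ) : ℂ) = ((2 * r : ℝ) : ℂ) := by
      rw [hωc]
      push_cast
      linear_combination 2 * hre
    have : ω x (j x) = 2 * r := by exact_mod_cast hfin
    rw [this]
    positivity

end
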